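/- Let A be an n×n real matrix with nonnegative entries, and let J, B, D be n×n real diagonal matrices with J_{ii} ∈ {0,1}, B_{ii} = β_i > 0, and D_{ii} = δ_i > 0 for each i. Let x : [0, ∞) → ℝⁿ be a differentiable function with x(t) ≥ 0 entrywise for all t ≥ 0 and satisfying the entrywise differential inequality (d/dt) x(t) ≤ (J B A − D) x(t) for all t ≥ 0. Let λ̄ > 0 and σ ≥ 0 be real numbers. If there exists a vector v ∈ ℝⁿ with all entries strictly positive such that every entry of vᵀ J B A + 𝟙ₙᵀ D is strictly less than the corresponding entry of vᵀ D, and vᵀ x(0) < λ̄ + σ, then the matrix J B A − D is Hurwitz stable and ∫₀^∞ 𝟙ₙᵀ D x(t) dt − σ ≤ λ̄. -/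

import Mathlib

open Matrix MeasureTheory

/-- Deterministic core of Proposition 1: if `x(t) ≥ 0` satisfies
`(d/dt) x(t) ≤ (J B A - D) x(t)` and there is a positive vector `v` with
`vᵀ J B A + 𝟙ₙᵀ D < vᵀ D` entrywise and `vᵀ x(0) < λ̄ + σ`, then `J B A - D` is
Hurwitz stable and `∫₀^∞ 𝟙ₙᵀ D x(t) dt - σ ≤ λ̄`. -/
theorem sir_accumulated_infection_bound
    (n : ℕ) (A : Matrix (Fin n) (Fin n) ℝ) (hA : ∀ i j, 0 ≤ A i j)
    (jd β δ : Fin n → ℝ)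
    (hjd : ∀ i, jd i = 0 ∨ jd i = 1) (hβ : ∀ i, 0 < β i) (hδ : ∀ i, 0 < δ i)
    (J B D : Matrix (Fin n) (Fin n) ℝ)
    (hJ : J = Matrix.diagonal jd) (hB : B = Matrix.diagonal β) (hD : D = Matrix.diagonal δ)
    (x x' : ℝ → Fin n → ℝ)
    (hx_nonneg : ∀ t ∈ Set.Ici (0 : ℝ), ∀ i, 0 ≤ x t i)
    (hderiv : ∀ t ∈ Set.Ici (0 : ℝ), HasDerivWithinAt x (x' t) (Set.Ici 0) t)
    (hineq : ∀ t ∈ Set.Ici (0 : ℝ), ∀ i, x' t i ≤ ((J * B * A - D) *ᵥ x t) i)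
    (lam σ : ℝ) (hlam : 0 < lam) (hσ : 0 ≤ σ)
    (v : Fin n → ℝ) (hv : ∀ i, 0 < v i)
    (h1 : ∀ j, (v ᵥ* (J * B * A)) j + ((fun _ : Fin n => (1 : ℝ)) ᵥ* D) j < (v ᵥ* D) j)
    (h2 : v ⬝ᵥ x 0 < lam + σ) :
    (∀ z ∈ spectrum ℂ ((J * B * A - D).map (Complex.ofReal ·)), z.re < 0) ∧
    IntegrableOn (fun t => ∑ i, (D *ᵥ x t) i) (Set.Ici 0) ∧
    (∫ t in Set.Ici (0 : ℝ), ∑ i, (D *ᵥ x t) i) - σ ≤ lam := by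
  set M : Matrix (Fin n) (Fin n) ℝ := J * B * A - D with hMdef
  -- entrywise nonnegativity of J*B*A
  have hJBA : ∀ i j, 0 ≤ (J * B * A) i j := by
    intro i j
    have hjd' : 0 ≤ jd i := by rcases hjd i with h | h <;> simp [h]
    rw [hJ, hB, Matrix.mul_assoc, Matrix.diagonal_mul, Matrix.diagonal_mul]
    exact mul_nonneg hjd' (mul_nonneg (hβ i).le (hA i j))
  -- M is Metzler: off-diagonal entries nonneg
  have hMoff : ∀ i j, i ≠ j → 0 ≤ M i j := by
    intro i j hij
    have : M i j = (J * B * A) i j := by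
      simp [hMdef, hD, Matrix.sub_apply, Matrix.diagonal_apply_ne _ hij]
    rw [this]; exact hJBA i j
  -- the key vector inequality: (vᵀ M)_j < -δ j
  have h1' : ∀ j, (v ᵥ* M) j < -δ j := by
    intro j
    have hh := h1 j
    rw [hD, Matrix.vecMul_diagonal, Matrix.vecMul_diagonal, one_mul] at hh
    have : (v ᵥ* M) j = (v ᵥ* (J * B * A)) j - v j * δ j := by
      rw [hMdef, Matrix.vecMul_sub, Pi.sub_apply, hD, Matrix.vecMul_diagonal]
    rw [this]; linarith
  constructor
  · -- Hurwitz stability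
    intro z hz
    set M' := M.map (Complex.ofReal ·) with hM'def
    rw [spectrum.mem_iff] at hz
    have hdet : (algebraMap ℂ (Matrix (Fin n) (Fin n) ℂ) z - M').det = 0 := by
      by_contra hne
      exact hz ((Matrix.isUnit_iff_isUnit_det _).mpr (isUnit_iff_ne_zero.mpr hne))
    obtain ⟨w, hw0, hw⟩ := (Matrix.exists_mulVec_eq_zero_iff).mpr hdet
    have heig : ∀ i, ∑ j, (M i j : ℂ) * w j = z * w i := by
      intro i
      have h0 : (algebraMap ℂ (Matrix (Fin n) (Fin n) ℂ) z - M') *ᵥ w = 0 := hw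
      rw [Matrix.sub_mulVec, Algebra.algebraMap_eq_smul_one, Matrix.smul_mulVec,
        Matrix.one_mulVec, sub_eq_zero] at h0
      have := congrFun h0.symm i
      simpa [Matrix.mulVec, dotProduct, hM'def, Matrix.map_apply] using this
    set a : Fin n → ℝ := fun i => ‖w i‖ with ha
    have ha_nonneg : ∀ i, 0 ≤ a i := fun i => norm_nonneg _
    have claim : ∀ i, z.re * a i ≤ ∑ j, M i j * a j := by
      intro i
      by_cases hwi : w i = 0
      · have : a i = 0 := by simp [ha, hwi]
        rw [this, mul_zero]
        apply Finset.sum_nonneg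
        intro j _
        by_cases hji : j = i
        · subst hji; rw [this, mul_zero]
        · exact mul_nonneg (hMoff i j (Ne.symm hji)) (ha_nonneg j)
      · have hai : 0 < a i := by
          simpa [ha] using norm_pos_iff.mpr hwi
        have key : z.re * a i * a i ≤ (∑ j, M i j * a j) * a i := by
          have e1 : (z * w i * (starRingEnd ℂ) (w i)).re = z.re * a i * a i := by
            rw [mul_assoc, Complex.mul_conj, Complex.mul_re, Complex.ofReal_re,
              Complex.ofReal_im, Complex.normSq_eq_norm_sq]
            have : ‖w i‖ = a i := rfl
            rw [this]; ring
          have e2 : z * w i * (starRingEnd ℂ) (w i)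
              = ∑ j, (M i j : ℂ) * (w j * (starRingEnd ℂ) (w i)) := by
            rw [← heig i, Finset.sum_mul]
            congr 1; ext j; ring
          have e3 : (z * w i * (starRingEnd ℂ) (w i)).re
              = ∑ j, M i j * (w j * (starRingEnd ℂ) (w i)).re := by
            rw [e2, Complex.re_sum]
            congr 1; ext j
            exact Complex.re_ofReal_mul _ _
          have e4 : ∀ j, M i j * (w j * (starRingEnd ℂ) (w i)).re ≤ M i j * (a j * a i) := by
            intro j
            by_cases hji : j = i
            · subst hji
              have : (w j * (starRingEnd ℂ) (w j)).re = a j * a j := by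
                rw [Complex.mul_conj]
                simp [ha, Complex.normSq_eq_norm_sq, sq]
              rw [this]
            · have hre : (w j * (starRingEnd ℂ) (w i)).re ≤ a j * a i := by
                calc (w j * (starRingEnd ℂ) (w i)).re ≤ ‖w j * (starRingEnd ℂ) (w i)‖ :=
                      Complex.re_le_norm _
                  _ = a j * a i := by simp [ha, _root_.map_mul, Complex.norm_conj]
              exact mul_le_mul_of_nonneg_left hre (hMoff i j (Ne.symm hji))
          calc z.re * a i * a i = (z * w i * (starRingEnd ℂ) (w i)).re := e1.symm
            _ = ∑ j, M i j * (w j * (starRingEnd ℂ) (w i)).re := e3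
            _ ≤ ∑ j, M i j * (a j * a i) := Finset.sum_le_sum fun j _ => e4 j
            _ = (∑ j, M i j * a j) * a i := by rw [Finset.sum_mul]; congr 1; ext j; ring
        exact le_of_mul_le_mul_right key hai
    obtain ⟨j0, hj0⟩ : ∃ j0, w j0 ≠ 0 := Function.ne_iff.mp hw0
    have haj0 : 0 < a j0 := by simpa [ha] using norm_pos_iff.mpr hj0
    have hS : 0 < ∑ i, v i * a i :=
      Finset.sum_pos' (fun i _ => mul_nonneg (hv i).le (ha_nonneg i))
        ⟨j0, Finset.mem_univ _, mul_pos (hv j0) haj0⟩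
    have hsum : z.re * (∑ i, v i * a i) ≤ ∑ j, (v ᵥ* M) j * a j := by
      calc z.re * (∑ i, v i * a i) = ∑ i, v i * (z.re * a i) := by
            rw [Finset.mul_sum]; congr 1; ext i; ring
        _ ≤ ∑ i, v i * (∑ j, M i j * a j) :=
            Finset.sum_le_sum fun i _ => mul_le_mul_of_nonneg_left (claim i) (hv i).le
        _ = ∑ j, (v ᵥ* M) j * a j := by
            simp only [Matrix.vecMul, dotProduct, Finset.mul_sum, Finset.sum_mul]
            rw [Finset.sum_comm]
            congr 1; ext i; congr 1; ext j; ring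
    have hneg : ∑ j, (v ᵥ* M) j * a j < 0 := by
      have hle : ∑ j, (v ᵥ* M) j * a j ≤ ∑ j, (-δ j) * a j :=
        Finset.sum_le_sum fun j _ => mul_le_mul_of_nonneg_right (h1' j).le (ha_nonneg j)
      have hlt : ∑ j, (-δ j) * a j < 0 := by
        have : ∑ j, (-δ j) * a j < ∑ _j : Fin n, (0 : ℝ) :=
          Finset.sum_lt_sum
            (fun j _ => by
              have := mul_nonneg (hδ j).le (ha_nonneg j); nlinarith)
            ⟨j0, Finset.mem_univ _, by nlinarith [mul_pos (hδ j0) haj0]⟩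
        simpa using this
      linarith
    by_contra hc
    push_neg at hc
    nlinarith
  · -- integrability and integral bound
    set g : ℝ → ℝ := fun t => ∑ i, δ i * x t i with hg
    have hgeq : (fun t => ∑ i, (D *ᵥ x t) i) = g := by
      funext t; simp [hD, Matrix.mulVec_diagonal, hg]
    have hcomp : ∀ t ∈ Set.Ici (0:ℝ), ∀ i,
        HasDerivWithinAt (fun s => x s i) (x' t i) (Set.Ici 0) t :=
      fun t ht i => (hasDerivWithinAt_pi.mp (hderiv t ht)) i
    have hxc : ∀ i, ContinuousOn (fun s => x s i) (Set.Ici 0) :=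
      fun i t ht => (hcomp t ht i).continuousWithinAt
    have hgc : ContinuousOn g (Set.Ici 0) := by
      apply continuousOn_finset_sum
      intro i _
      exact continuousOn_const.mul (hxc i)
    have hg_nonneg : ∀ t ∈ Set.Ici (0:ℝ), 0 ≤ g t := by
      intro t ht
      exact Finset.sum_nonneg fun i _ => mul_nonneg (hδ i).le (hx_nonneg t ht i)
    set y : ℝ → ℝ := fun t => ∑ i, v i * x t i with hy
    have hy' : ∀ t ∈ Set.Ici (0:ℝ),
        HasDerivWithinAt y (∑ i, v i * x' t i) (Set.Ici 0) t := by
      intro t ht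
      exact HasDerivWithinAt.fun_sum fun i _ => (hcomp t ht i).const_mul (v i)
    have hy_nonneg : ∀ t ∈ Set.Ici (0:ℝ), 0 ≤ y t :=
      fun t ht => Finset.sum_nonneg fun i _ => mul_nonneg (hv i).le (hx_nonneg t ht i)
    have hyd : ∀ t ∈ Set.Ici (0:ℝ), ∑ i, v i * x' t i ≤ -(g t) := by
      intro t ht
      have step1 : ∑ i, v i * x' t i ≤ ∑ i, v i * (M *ᵥ x t) i :=
        Finset.sum_le_sum fun i _ => mul_le_mul_of_nonneg_left (hineq t ht i) (hv i).le
      have step2 : ∑ i, v i * (M *ᵥ x t) i = ∑ j, (v ᵥ* M) j * x t j := by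
        have := dotProduct_mulVec v M (x t)
        simpa [dotProduct] using this
      have step3 : ∑ j, (v ᵥ* M) j * x t j ≤ ∑ j, (-δ j) * x t j :=
        Finset.sum_le_sum fun j _ =>
          mul_le_mul_of_nonneg_right (h1' j).le (hx_nonneg t ht j)
      have step4 : ∑ j, (-δ j) * x t j = -(g t) := by
        simp [hg, Finset.sum_neg_distrib, neg_mul]
      linarith
    -- partial bound on interval integrals
    have hbound : ∀ T : ℝ, 0 ≤ T → ∫ s in (0:ℝ)..T, g s ≤ y 0 := by
      intro T hT
      rcases hT.eq_or_lt with rfl | hT'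
      · simpa using hy_nonneg 0 Set.self_mem_Ici
      set F : ℝ → ℝ := fun t => y t + ∫ s in (0:ℝ)..t, g s with hF
      have hanti : AntitoneOn F (Set.Icc 0 T) := by
        have hIntIcc : IntegrableOn g (Set.Icc 0 T) :=
          (hgc.mono (Set.Icc_subset_Ici_self)).integrableOn_compact isCompact_Icc
        apply antitoneOn_of_hasDerivWithinAt_nonpos (f' := fun t => (∑ i, v i * x' t i) + g t)
          (convex_Icc 0 T)
        · -- continuity of F on Icc 0 T
          apply ContinuousOn.add
          · exact fun t ht => (hy' t ht.1).continuousWithinAt.mono Set.Icc_subset_Ici_self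
          · have hc0 : ContinuousOn (fun u => ∫ s in Set.Ioc (0:ℝ) u, g s) (Set.Icc 0 T) :=
              intervalIntegral.continuousOn_primitive hIntIcc
            apply hc0.congr
            intro u hu
            show (∫ s in (0:ℝ)..u, g s) = ∫ s in Set.Ioc (0:ℝ) u, g s
            rw [intervalIntegral.integral_of_le hu.1]
        · -- derivative on interior
          intro t ht
          rw [interior_Icc] at ht
          have ht0 : (0:ℝ) < t := ht.1
          have htI : t ∈ Set.Ici (0:ℝ) := ht0.le
          have hsub : Set.Ioo (0:ℝ) T ⊆ Set.Ici 0 := fun s hs => hs.1.le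
          have hdy : HasDerivWithinAt y (∑ i, v i * x' t i) (Set.Ioo 0 T) t :=
            (hy' t htI).mono hsub
          have hnbhd : Set.Ici (0:ℝ) ∈ nhds t :=
            Filter.mem_of_superset (Ioi_mem_nhds ht0) Set.Ioi_subset_Ici_self
          have hdg : HasDerivAt (fun u => ∫ s in (0:ℝ)..u, g s) (g t) t := by
            apply intervalIntegral.integral_hasDerivAt_right
            · apply ContinuousOn.intervalIntegrable
              rw [Set.uIcc_of_le ht0.le]
              exact hgc.mono Set.Icc_subset_Ici_self
            · exact ⟨Set.Ici 0, hnbhd, hgc.aestronglyMeasurable measurableSet_Ici⟩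
            · exact hgc.continuousAt hnbhd
          rw [interior_Icc]
          exact hdy.add (hdg.hasDerivWithinAt)
        · intro t ht
          rw [interior_Icc] at ht
          have := hyd t ht.1.le
          linarith
      have h0mem : (0:ℝ) ∈ Set.Icc (0:ℝ) T := ⟨le_refl _, hT⟩
      have hTmem : T ∈ Set.Icc (0:ℝ) T := ⟨hT, le_refl _⟩
      have := hanti h0mem hTmem hT
      have hF0 : F 0 = y 0 := by simp [hF]
      have hyT := hy_nonneg T hT
      rw [hF0] at this
      simp only [hF] at this
      linarith
    have hy0 : y 0 < lam + σ := by
      have : v ⬝ᵥ x 0 = y 0 := by simp [dotProduct, hy]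
      linarith [h2, this ▸ h2]
    -- integrability on Ioi 0
    have hIocInt : ∀ k : ℕ, IntegrableOn g (Set.Ioc (0:ℝ) k) := by
      intro k
      exact ((hgc.mono Set.Icc_subset_Ici_self).integrableOn_compact
        isCompact_Icc).mono_set Set.Ioc_subset_Icc_self
    have hnormbound : ∀ k : ℕ, (∫ s in (0:ℝ)..(k:ℝ), ‖g s‖) ≤ y 0 := by
      intro k
      have heqn : (∫ s in (0:ℝ)..(k:ℝ), ‖g s‖) = ∫ s in (0:ℝ)..(k:ℝ), g s := by
        rw [intervalIntegral.integral_of_le (Nat.cast_nonneg k),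
          intervalIntegral.integral_of_le (Nat.cast_nonneg k)]
        apply setIntegral_congr_fun measurableSet_Ioc
        intro s hs
        exact Real.norm_of_nonneg (hg_nonneg s hs.1.le)
      rw [heqn]
      exact hbound _ (Nat.cast_nonneg k)
    have hInt : IntegrableOn g (Set.Ioi (0:ℝ)) := by
      apply integrableOn_Ioi_of_intervalIntegral_norm_bounded (y 0) 0 hIocInt
        tendsto_natCast_atTop_atTop
      exact Filter.Eventually.of_forall hnormbound
    have hIntIci : IntegrableOn g (Set.Ici (0:ℝ)) :=
      Iff.mpr integrableOn_Ici_iff_integrableOn_Ioi hInt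
    refine ⟨by rw [hgeq]; exact hIntIci, ?_⟩
    have htend := intervalIntegral_tendsto_integral_Ioi 0 hInt
      (tendsto_natCast_atTop_atTop (R := ℝ))
    have hval : (∫ t in Set.Ioi (0:ℝ), g t) ≤ y 0 :=
      le_of_tendsto htend
        (Filter.Eventually.of_forall fun k => hbound _ (Nat.cast_nonneg k))
    have : (∫ t in Set.Ici (0:ℝ), ∑ i, (D *ᵥ x t) i) = ∫ t in Set.Ioi (0:ℝ), g t := by
      rw [hgeq, integral_Ici_eq_integral_Ioi]
    rw [this]
    linarith
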